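/- arXiv:1907.05605 — 2 statements merged into one kernel-verified Lean document; each statement's English description precedes it below -/
import Mathlib

section
/- Let S be a nonempty finite set and let μ_1, μ_2 be probability measures on F_S. If supp(μ_1) = supp(μ_2), then k(μ_1) = k(μ_2). -/
open MeasureTheory

namespace CFTP

variable {S : Type*}

/-- Forward composition `f_t ∘ f_{t-1} ∘ ⋯ ∘ f_1` (functions are indexed by 1,2,…). -/
def fwd (f : ℕ → S → S) : ℕ → S → S
  | 0 => id
  | t + 1 => f (t + 1) ∘ fwd f t

/-- Backward composition `f_1 ∘ f_2 ∘ ⋯ ∘ f_t`. -/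
def bwd (f : ℕ → S → S) : ℕ → S → S
  | 0 => id
  | t + 1 => bwd f t ∘ f (t + 1)

/-- `k_t(f⃗)`: the number of equivalence classes of `i ~ j ↔ f⃗_t i = f⃗_t j`,
i.e. the cardinality of the image of the forward composition. -/
noncomputable def ktF (f : ℕ → S → S) (t : ℕ) : ℕ := Set.ncard (Set.range (fwd f t))

/-- `k_t(f⃖)`: the cardinality of the image of the backward composition. -/
noncomputable def ktB (f : ℕ → S → S) (t : ℕ) : ℕ := Set.ncard (Set.range (bwd f t))

/-- `k(f⃗)`: the eventual (= minimal) value of the non-increasing sequence `k_t(f⃗)`. -/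
noncomputable def kF (f : ℕ → S → S) : ℕ := ⨅ t, ktF f t

/-- `k(f⃖)`. -/
noncomputable def kB (f : ℕ → S → S) : ℕ := ⨅ t, ktB f t

/-- `μbar` is the joint law of an i.i.d. sequence with one-step law `ν`,
i.e. the countable product measure `∏_{s ∈ ℕ} ν`, characterised by its
values on cylinder events. -/
def IsIID [MeasurableSpace S] (ν : Measure (S → S)) (μbar : Measure (ℕ → S → S)) : Prop :=
  ∀ (I : Finset ℕ) (g : ℕ → S → S),
    μbar {F | ∀ s ∈ I, F s = g s} = ∏ s ∈ I, ν {g s}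

/-- The support of a probability measure on the finite set `F_S`. -/
def supp [MeasurableSpace S] (ν : Measure (S → S)) : Set (S → S) := {f | 0 < ν {f}}

/-- A stochastic matrix: nonnegative entries, row sums one. -/
def IsStochastic [Fintype S] (P : S → S → ℝ) : Prop :=
  (∀ i j, 0 ≤ P i j) ∧ ∀ i, ∑ j, P i j = 1

/-- `ν ∈ L(P)`: the measure `ν` on `F_S` is consistent with the matrix `P`. -/
def Consistent [Fintype S] [MeasurableSpace S] (P : S → S → ℝ) (ν : Measure (S → S)) : Prop :=
  ∀ i j, ν {f : S → S | f i = j} = ENNReal.ofReal (P i j)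

/-- Irreducibility: for all `i j` some power of `P` has positive `(i,j)` entry. -/
def Irred [Fintype S] [DecidableEq S] (P : S → S → ℝ) : Prop :=
  ∀ i j, ∃ t, 1 ≤ t ∧ 0 < ((Matrix.of P) ^ t) i j

/-- Aperiodicity: for each `i`, the gcd of `{t ≥ 1 : (P^t)_{i,i} > 0}` is `1`,
expressed as: every common divisor of that set equals `1`. -/
def Aperiodic [Fintype S] [DecidableEq S] (P : S → S → ℝ) : Prop :=
  ∀ i, ∀ d : ℕ, (∀ t, 1 ≤ t → 0 < ((Matrix.of P) ^ t) i i → d ∣ t) → d = 1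

/-- A function is constant. -/
def IsConst (g : S → S) : Prop := ∀ i j, g i = g j

/-- The backward coalescence time `C`. -/
noncomputable def Ctime (F : ℕ → S → S) : ℕ∞ :=
  sInf ((fun t : ℕ => (t : ℕ∞)) '' {t : ℕ | 1 ≤ t ∧ IsConst (bwd F t)})

/-- The forward coalescence time `T`. -/
noncomputable def Ttime (F : ℕ → S → S) : ℕ∞ :=
  sInf ((fun t : ℕ => (t : ℕ∞)) '' {t : ℕ | 1 ≤ t ∧ IsConst (fwd F t)})

/-- The 0-1 matrix `M_f`. -/
noncomputable def Mmat [Fintype S] [DecidableEq S] (f : S → S) : Matrix S S ℝ :=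
  Matrix.of fun i j => if f i = j then 1 else 0

/-- The product `M_{f_t} M_{f_{t-1}} ⋯ M_{f_1}`. -/
noncomputable def Mprod [Fintype S] [DecidableEq S] (f : ℕ → S → S) : ℕ → Matrix S S ℝ
  | 0 => 1
  | t + 1 => Mmat (f (t + 1)) * Mprod f t

/-- The event that states `i` and `j` coalesce. -/
def coalEvent (i j : S) : Set (ℕ → S → S) := {F | ∃ t, 1 ≤ t ∧ fwd F t i = fwd F t j}


def mSet (V : Set (S → S)) : Set ℕ :=
  {n | ∃ t, ∃ f : ℕ → S → S, (∀ s, 1 ≤ s → s ≤ t → f s ∈ V) ∧ ktF f t = n}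

noncomputable def mval (V : Set (S → S)) : ℕ := sInf (mSet V)

lemma mSet_nonempty (V : Set (S → S)) : (mSet V).Nonempty :=
  ⟨ktF (fun _ => id) 0, 0, fun _ => id, fun s h1 h0 => absurd (h1.trans h0) (by omega), rfl⟩

lemma fwd_add (F g : ℕ → S → S) (a b : ℕ)
    (h : ∀ i, 1 ≤ i → i ≤ b → F (a + i) = g i) :
    fwd F (a + b) = fwd g b ∘ fwd F a := by
  induction b with
  | zero => rfl
  | succ b ih =>
    have ih' : fwd F (a + b) = fwd g b ∘ fwd F a := ih fun i h1 hb => h i h1 (by omega)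
    have : a + (b + 1) = (a + b) + 1 := by omega
    rw [this]
    show F (a + b + 1) ∘ fwd F (a + b) = (g (b+1) ∘ fwd g b) ∘ fwd F a
    have hb1 : F (a + (b + 1)) = g (b + 1) := h (b+1) (by omega) le_rfl
    rw [ih', ← hb1]
    have : a + b + 1 = a + (b + 1) := by omega
    rw [this, Function.comp_assoc]

lemma kF_le (F : ℕ → S → S) (t : ℕ) : kF F ≤ ktF F t :=
  ciInf_le (OrderBot.bddBelow _) t

lemma le_kF (F : ℕ → S → S) (m : ℕ) (h : ∀ t, m ≤ ktF F t) : m ≤ kF F :=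
  le_ciInf h

lemma meas_cyl [MeasurableSpace S] [DiscreteMeasurableSpace S] [Countable S]
    (J : Finset ℕ) (h : ℕ → S → S) :
    MeasurableSet {F : ℕ → S → S | ∀ s ∈ J, F s = h s} := by
  have : {F : ℕ → S → S | ∀ s ∈ J, F s = h s} = ⋂ s ∈ J, (fun F : ℕ → S → S => F s) ⁻¹' {h s} := by
    ext F; simp
  rw [this]
  exact MeasurableSet.biInter (J : Set ℕ).to_countable fun s _ =>
    (measurable_pi_apply s) (MeasurableSet.singleton _)

lemma cyl_decomp [Fintype S] [MeasurableSpace S] [DiscreteMeasurableSpace S]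
    (ν : Measure (S → S)) (μbar : Measure (ℕ → S → S)) (hIID : IsIID ν μbar)
    (J K : Finset ℕ) (hJK : Disjoint J K)
    (E : Set (ℕ → S → S)) (hE : ∀ F F' : ℕ → S → S, (∀ s ∈ J, F s = F' s) → F ∈ E → F' ∈ E)
    (h : ℕ → S → S) :
    μbar (E ∩ {F | ∀ s ∈ K, F s = h s}) = μbar E * ∏ s ∈ K, ν {h s} := by
  classical
  set ext : (J → (S → S)) → (ℕ → S → S) :=
    fun φ s => if hs : s ∈ J then φ ⟨s, hs⟩ else h s with hext
  set C : (J → (S → S)) → Set (ℕ → S → S) :=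
    fun φ => {F | ∀ s ∈ J, F s = ext φ s} with hC
  set Φ : Finset (J → (S → S)) := Finset.univ.filter (fun φ => ext φ ∈ E) with hΦ
  set B : Set (ℕ → S → S) := {F | ∀ s ∈ K, F s = h s} with hB
  -- coverage
  have hcover : E = ⋃ φ ∈ Φ, C φ := by
    ext F
    constructor
    · intro hF
      have hmem : (fun s : J => F s.1) ∈ Φ := by
        simp only [hΦ, Finset.mem_filter, Finset.mem_univ, true_and]
        exact hE F _ (fun s hs => by simp [hext, hs]) hF
      have hFC : F ∈ C (fun s : J => F s.1) := by
        intro s hs; simp [hext, hs]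
      exact Set.mem_biUnion hmem hFC
    · intro hF
      obtain ⟨φ, hφ, hFC⟩ := Set.mem_iUnion₂.1 hF
      simp only [hΦ, Finset.mem_filter, Finset.mem_univ, true_and] at hφ
      exact hE (ext φ) F (fun s hs => (hFC s hs).symm) hφ
  -- disjointness
  have hdisj : (↑Φ : Set (J → (S → S))).PairwiseDisjoint C := by
    intro φ _ φ' _ hne
    rw [Function.onFun, Set.disjoint_left]
    intro F hF hF'
    apply hne
    funext s
    have h1 := hF s.1 s.2
    have h2 := hF' s.1 s.2
    simp only [hext, s.2, dif_pos] at h1 h2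
    rw [← h1, ← h2]
  -- C φ ∩ B as a single cylinder
  have hCB : ∀ φ, C φ ∩ B = {F | ∀ s ∈ J ∪ K, F s = ext φ s} := by
    intro φ
    ext F
    simp only [hC, hB, Set.mem_inter_iff, Set.mem_setOf_eq, Finset.mem_union]
    constructor
    · rintro ⟨h1, h2⟩ s hs
      rcases hs with hs | hs
      · exact h1 s hs
      · have hsJ : s ∉ J := fun hsJ => (Finset.disjoint_left.1 hJK hsJ) hs
        simp only [hext, hsJ, dif_neg, not_false_iff]
        exact h2 s hs
    · intro hh
      constructor
      · intro s hs; exact hh s (Or.inl hs)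
      · intro s hs
        have hsJ : s ∉ J := fun hsJ => (Finset.disjoint_left.1 hJK hsJ) hs
        have := hh s (Or.inr hs)
        simpa only [hext, hsJ, dif_neg, not_false_iff] using this
  have hmeasC : ∀ φ, MeasurableSet (C φ) := fun φ => meas_cyl J (ext φ)
  have hmeasB : MeasurableSet B := meas_cyl K h
  -- measures
  have hsum1 : μbar E = ∑ φ ∈ Φ, μbar (C φ) := by
    rw [hcover]
    exact measure_biUnion_finset hdisj fun φ _ => hmeasC φ
  have hsum2 : μbar (E ∩ B) = ∑ φ ∈ Φ, μbar (C φ ∩ B) := by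
    have : E ∩ B = ⋃ φ ∈ Φ, (C φ ∩ B) := by
      rw [hcover, Set.iUnion₂_inter]
    rw [this]
    exact measure_biUnion_finset
      (hdisj.mono' fun φ φ' hd => hd.mono Set.inter_subset_left Set.inter_subset_left)
      fun φ _ => (hmeasC φ).inter hmeasB
  have hval1 : ∀ φ, μbar (C φ) = ∏ s ∈ J, ν {ext φ s} := fun φ => hIID J (ext φ)
  have hval2 : ∀ φ, μbar (C φ ∩ B) = (∏ s ∈ J, ν {ext φ s}) * ∏ s ∈ K, ν {h s} := by
    intro φ
    rw [hCB φ, hIID (J ∪ K) (ext φ), Finset.prod_union hJK]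
    congr 1
    apply Finset.prod_congr rfl
    intro s hs
    have hsJ : s ∉ J := fun hsJ => (Finset.disjoint_left.1 hJK hsJ) hs
    simp [hext, hsJ]
  rw [hsum1, hsum2, Finset.sum_mul]
  exact Finset.sum_congr rfl fun φ _ => by rw [hval2 φ, hval1 φ]

lemma measure_not_supp [Fintype S] [MeasurableSpace S] [DiscreteMeasurableSpace S]
    (ν : Measure (S → S)) (μbar : Measure (ℕ → S → S)) (hIID : IsIID ν μbar) (s : ℕ) :
    μbar {F : ℕ → S → S | F s ∉ supp ν} = 0 := by
  have hsub : {F : ℕ → S → S | F s ∉ supp ν}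
      = ⋃ f : S → S, {F : ℕ → S → S | F s = f ∧ f ∉ supp ν} := by
    ext F; simp only [Set.mem_setOf_eq, Set.mem_iUnion]
    exact ⟨fun h => ⟨F s, rfl, h⟩, fun ⟨f, hf, h⟩ => hf ▸ h⟩
  rw [hsub]
  refine measure_iUnion_null fun f => ?_
  by_cases hf : f ∈ supp ν
  · have : {F : ℕ → S → S | F s = f ∧ f ∉ supp ν} = ∅ := by
      ext F; simp [hf]
    simp [this]
  · have hν : ν {f} = 0 := by
      by_contra h
      exact hf (pos_iff_ne_zero.2 h)
    have hcyl : {F : ℕ → S → S | F s = f ∧ f ∉ supp ν}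
        = {F : ℕ → S → S | ∀ s' ∈ ({s} : Finset ℕ), F s' = (fun _ => f) s'} := by
      ext F; simp [hf]
    rw [hcyl, hIID ({s} : Finset ℕ) (fun _ => f)]
    simp [hν]

lemma key [Fintype S] [Nonempty S] [MeasurableSpace S] [DiscreteMeasurableSpace S]
    (ν : Measure (S → S)) [IsProbabilityMeasure ν]
    (μbar : Measure (ℕ → S → S)) [IsProbabilityMeasure μbar]
    (hIID : IsIID ν μbar) (k : ℕ) (hk : μbar {F | kF F = k} = 1) :
    k = mval (supp ν) := by
  classical
  set V := supp ν with hV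
  set m := mval V with hm
  obtain ⟨t₀, g, hg, hgm⟩ := Nat.sInf_mem (mSet_nonempty V)
  set p := ∏ i ∈ Finset.Icc 1 t₀, ν {g i} with hp
  have hp0 : p ≠ 0 := Finset.prod_ne_zero_iff.2 fun i hi =>
    (hg i (Finset.mem_Icc.1 hi).1 (Finset.mem_Icc.1 hi).2).ne'
  have hp1 : p ≤ 1 := Finset.prod_le_one (fun _ _ => zero_le) (fun _ _ => prob_le_one)
  -- block events
  set Kn : ℕ → Finset ℕ := fun n => (Finset.Icc 1 t₀).image (fun i => n * t₀ + i) with hKn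
  set hfun : ℕ → ℕ → S → S := fun n s => g (s - n * t₀) with hhfun
  set Bn : ℕ → Set (ℕ → S → S) := fun n => {F | ∀ s ∈ Kn n, F s = hfun n s} with hBn
  have hBmem : ∀ n (F : ℕ → S → S),
      F ∈ Bn n ↔ ∀ i, 1 ≤ i → i ≤ t₀ → F (n * t₀ + i) = g i := by
    intro n F
    constructor
    · intro hF i h1 h2
      have : n * t₀ + i ∈ Kn n :=
        Finset.mem_image.2 ⟨i, Finset.mem_Icc.2 ⟨h1, h2⟩, rfl⟩
      have h3 := hF _ this
      simp only [hhfun] at h3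
      rwa [Nat.add_sub_cancel_left] at h3
    · intro hF s hs
      obtain ⟨i, hi, rfl⟩ := Finset.mem_image.1 hs
      rw [hhfun]
      simp only [Nat.add_sub_cancel_left]
      exact hF i (Finset.mem_Icc.1 hi).1 (Finset.mem_Icc.1 hi).2
  have hmeasBn : ∀ n, MeasurableSet (Bn n) := fun n => meas_cyl (Kn n) (hfun n)
  have hKprod : ∀ n, ∏ s ∈ Kn n, ν {hfun n s} = p := by
    intro n
    rw [hKn, Finset.prod_image (fun x _ y _ h => by omega)]
    refine Finset.prod_congr rfl fun i _ => ?_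
    rw [hhfun]; simp [Nat.add_sub_cancel_left]
  -- the events E N
  set E : ℕ → Set (ℕ → S → S) := fun N => ⋂ n ∈ Finset.range N, (Bn n)ᶜ with hE
  have hE0 : E 0 = Set.univ := by simp [hE]
  have hrec : ∀ N, μbar (E (N + 1)) = μbar (E N) * (1 - p) := by
    intro N
    have hsplit : E (N + 1) = E N \ Bn N := by
      have h : Finset.range (N + 1) = insert N (Finset.range N) := Finset.range_add_one
      ext F
      simp only [hE, h, Set.mem_iInter, Set.mem_compl_iff, Set.mem_diff, Finset.mem_insert]
      constructor
      · intro hF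
        exact ⟨fun n hn => hF n (Or.inr hn), hF N (Or.inl rfl)⟩
      · rintro ⟨h1, h2⟩ n hn
        rcases hn with rfl | hn
        · exact h2
        · exact h1 n hn
    have hdet : ∀ F F' : ℕ → S → S,
        (∀ s ∈ Finset.Icc 1 (N * t₀), F s = F' s) → F ∈ E N → F' ∈ E N := by
      intro F F' hag hF
      simp only [hE, Set.mem_iInter, Set.mem_compl_iff] at hF ⊢
      intro n hn hF'B
      refine hF n hn ?_
      intro s hs
      obtain ⟨i, hi, rfl⟩ := Finset.mem_image.1 hs
      obtain ⟨hi1, hi2⟩ := Finset.mem_Icc.1 hi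
      have hnN : n + 1 ≤ N := Finset.mem_range.1 hn
      have hle : n * t₀ + i ≤ N * t₀ := by
        calc n * t₀ + i ≤ n * t₀ + t₀ := by omega
        _ = (n + 1) * t₀ := by ring
        _ ≤ N * t₀ := Nat.mul_le_mul_right _ hnN
      have hmem : n * t₀ + i ∈ Finset.Icc 1 (N * t₀) := Finset.mem_Icc.2 ⟨by omega, hle⟩
      rw [hag _ hmem]
      exact hF'B _ hs
    have hdisjJK : Disjoint (Finset.Icc 1 (N * t₀)) (Kn N) := by
      rw [Finset.disjoint_left]
      intro s hsJ hsK
      obtain ⟨i, hi, rfl⟩ := Finset.mem_image.1 hsK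
      have := (Finset.mem_Icc.1 hsJ).2
      have := (Finset.mem_Icc.1 hi).1
      omega
    have hkey := cyl_decomp ν μbar hIID (Finset.Icc 1 (N * t₀)) (Kn N) hdisjJK (E N) hdet (hfun N)
    rw [hKprod N] at hkey
    have hsum := measure_inter_add_diff (μ := μbar) (E N) (hmeasBn N)
    have hBset : {F : ℕ → S → S | ∀ s ∈ Kn N, F s = hfun N s} = Bn N := rfl
    rw [hBset] at hkey
    rw [hkey] at hsum
    have halt : μbar (E N) * p + μbar (E N) * (1 - p) = μbar (E N) := by
      rw [← mul_add, add_tsub_cancel_of_le hp1, mul_one]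
    rw [hsplit]
    have hfin : μbar (E N) * p ≠ ⊤ :=
      (mul_le_one' prob_le_one hp1).trans_lt ENNReal.one_lt_top |>.ne
    have := hsum.trans halt.symm
    rw [add_comm (μbar (E N) * p) _, add_comm (μbar (E N) * p) _] at this
    exact WithTop.add_right_cancel hfin this
  have hEN : ∀ N, μbar (E N) = (1 - p) ^ N := by
    intro N
    induction N with
    | zero => simp [hE0]
    | succ N ih => rw [hrec N, ih, pow_succ]
  -- the good event
  set G2 : Set (ℕ → S → S) := ⋃ n, Bn n with hG2
  have hG2c : μbar G2ᶜ = 0 := by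
    have hsub : ∀ N, G2ᶜ ⊆ E N := by
      intro N
      rw [hG2, Set.compl_iUnion]
      intro F hF
      simp only [Set.mem_iInter, Set.mem_compl_iff] at hF
      simp only [hE, Set.mem_iInter, Set.mem_compl_iff]
      exact fun n _ => hF n
    have hle : ∀ N, μbar G2ᶜ ≤ (1 - p) ^ N := fun N => (measure_mono (hsub N)).trans (hEN N).le
    have h1p : (1 : ENNReal) - p < 1 := ENNReal.sub_lt_self ENNReal.one_ne_top one_ne_zero hp0
    have := ge_of_tendsto' (ENNReal.tendsto_pow_atTop_nhds_zero_of_lt_one h1p) hle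
    exact le_antisymm this zero_le
  set G1 : Set (ℕ → S → S) := {F | ∀ s, F s ∈ V} with hG1
  have hG1c : μbar G1ᶜ = 0 := by
    have : G1ᶜ ⊆ ⋃ s : ℕ, {F : ℕ → S → S | F s ∉ supp ν} := by
      intro F hF
      simp only [hG1, Set.mem_compl_iff, Set.mem_setOf_eq, not_forall] at hF
      obtain ⟨s, hs⟩ := hF
      exact Set.mem_iUnion.2 ⟨s, hs⟩
    exact measure_mono_null this (measure_iUnion_null fun s => measure_not_supp ν μbar hIID s)
  set G : Set (ℕ → S → S) := G1 ∩ G2 with hG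
  have hmeasG : MeasurableSet G := by
    refine MeasurableSet.inter ?_ (MeasurableSet.iUnion hmeasBn)
    have : G1 = ⋂ s : ℕ, (fun F : ℕ → S → S => F s) ⁻¹' V := by
      ext F; simp [hG1]
    rw [this]
    exact MeasurableSet.iInter fun s =>
      measurable_pi_apply s (MeasurableSet.of_discrete)
  have hGone : μbar G = 1 := by
    rw [← prob_compl_eq_zero_iff hmeasG, hG, Set.compl_inter]
    exact measure_union_null hG1c hG2c
  -- on G, kF = m
  have hGsub : G ⊆ {F | kF F = m} := by
    rintro F ⟨hF1, hF2⟩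
    have hlow : m ≤ kF F :=
      le_kF F m fun t => Nat.sInf_le ⟨t, F, fun s _ _ => hF1 s, rfl⟩
    obtain ⟨n, hFB⟩ := Set.mem_iUnion.1 hF2
    have hblock := (hBmem n F).1 hFB
    have hcomp : fwd F (n * t₀ + t₀) = fwd g t₀ ∘ fwd F (n * t₀) :=
      fwd_add F g (n * t₀) t₀ hblock
    have hhigh : kF F ≤ m := by
      refine (kF_le F (n * t₀ + t₀)).trans ?_
      have hgm' : ktF g t₀ = m := hgm
      rw [← hgm']
      unfold ktF
      rw [hcomp]
      exact Set.ncard_le_ncard (Set.range_comp_subset_range _ _) (Set.toFinite _)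
    exact le_antisymm hhigh hlow
  -- conclude
  by_contra hkm
  have hdisj : {F : ℕ → S → S | kF F = k} ⊆ Gᶜ := by
    intro F hF hFG
    exact hkm (hF.symm.trans (hGsub hFG))
  have : (1 : ENNReal) ≤ μbar Gᶜ := hk ▸ measure_mono hdisj
  rw [prob_compl_eq_zero_iff hmeasG |>.2 hGone] at this
  exact absurd this (by simp)

-- STATEMENT 5
theorem stmt5 [Fintype S] [Nonempty S] [MeasurableSpace S] [DiscreteMeasurableSpace S]
    (ν₁ ν₂ : Measure (S → S)) [IsProbabilityMeasure ν₁] [IsProbabilityMeasure ν₂]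
    (μbar₁ μbar₂ : Measure (ℕ → S → S))
    [IsProbabilityMeasure μbar₁] [IsProbabilityMeasure μbar₂]
    (h₁ : IsIID ν₁ μbar₁) (h₂ : IsIID ν₂ μbar₂)
    (k₁ k₂ : ℕ)
    (hk₁ : μbar₁ {F | kF F = k₁} = 1) (hk₂ : μbar₂ {F | kF F = k₂} = 1)
    (hsupp : supp ν₁ = supp ν₂) :
    k₁ = k₂ := by
  rw [key ν₁ μbar₁ h₁ k₁ hk₁, key ν₂ μbar₂ h₂ k₂ hk₂, hsupp]

end CFTP
end

section
/- Let S be a finite set with |S| = n ≥ 3, let P be an irreducible stochastic matrix on S, and let μ be a probability measure consistent with P. Then k(μ) = n − 1 if and only if the set 𝒞(μ) of possible coalescing pairs contains exactly one pair. -/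
open MeasureTheory

namespace CFTP

variable {S : Type*}

/-! ### Auxiliary machinery for `stmt15` -/

section Aux

variable {S : Type*}
set_option linter.unusedSectionVars false

lemma fwd_congr {f g : ℕ → S → S} {T : ℕ} (h : ∀ s, 1 ≤ s → s ≤ T → f s = g s) :
    fwd f T = fwd g T := by
  induction T with
  | zero => rfl
  | succ t ih =>
      have h1 := ih (fun s hs1 hs2 => h s hs1 (hs2.trans (Nat.le_succ t)))
      show f (t+1) ∘ fwd f t = g (t+1) ∘ fwd g t
      rw [h1, h (t+1) (by omega) le_rfl]

/-- Concatenation of two letter sequences, the first used for times `1,…,T`. -/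
def cat (g : ℕ → S → S) (T : ℕ) (h : ℕ → S → S) : ℕ → S → S :=
  fun s => if s ≤ T then g s else h (s - T)

lemma fwd_cat (g h : ℕ → S → S) (T T' : ℕ) :
    fwd (cat g T h) (T + T') = fwd h T' ∘ fwd g T := by
  induction T' with
  | zero =>
      simp only [Nat.add_zero]
      have : fwd (cat g T h) T = fwd g T :=
        fwd_congr (fun s _ hs2 => by simp [cat, hs2])
      simp [fwd, this]
  | succ t ih =>
      show cat g T h (T + t + 1) ∘ fwd (cat g T h) (T + t) = _
      have hc : cat g T h (T + t + 1) = h (t + 1) := by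
        simp only [cat]
        have hle : ¬ (T + t + 1 ≤ T) := by omega
        have harg : T + t + 1 - T = t + 1 := by omega
        rw [if_neg hle, harg]
      rw [hc, ih]
      rfl

section Comb
variable [Fintype S] [DecidableEq S]

lemma ncard_range_le_sub_two {φ : S → S} {p q : S} (hpq : p ≠ q)
    (h : ∀ x, ∃ y, y ≠ p ∧ y ≠ q ∧ φ y = φ x) :
    (Set.range φ).ncard ≤ Fintype.card S - 2 := by
  have hsub : Set.range φ ⊆ φ '' (Set.univ \ {p, q}) := by
    rintro x ⟨y, rfl⟩
    obtain ⟨z, hzp, hzq, hz⟩ := h y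
    exact ⟨z, ⟨trivial, by simp [hzp, hzq]⟩, hz⟩
  calc (Set.range φ).ncard ≤ (φ '' (Set.univ \ {p, q})).ncard :=
        Set.ncard_le_ncard hsub (Set.toFinite _)
    _ ≤ (Set.univ \ ({p, q} : Set S)).ncard := Set.ncard_image_le (Set.toFinite _)
    _ = Fintype.card S - 2 := by
        rw [Set.ncard_diff (Set.subset_univ _), Set.ncard_univ,
          Nat.card_eq_fintype_card, Set.ncard_pair hpq]

lemma two_pairs_bound {φ : S → S} {a b c d : S} (hab : a ≠ b) (hcd : c ≠ d)
    (h1 : φ a = φ b) (h2 : φ c = φ d)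
    (hne : ¬ ((c = a ∧ d = b) ∨ (c = b ∧ d = a))) :
    (Set.range φ).ncard ≤ Fintype.card S - 2 := by
  by_cases hbd : b = d
  · subst hbd
    have hac : a ≠ c := by rintro rfl; exact hne (Or.inl ⟨rfl, rfl⟩)
    refine ncard_range_le_sub_two hac (fun x => ?_)
    by_cases hxa : x = a
    · subst hxa; exact ⟨b, hab.symm, hcd.symm, h1.symm⟩
    · by_cases hxc : x = c
      · subst hxc; exact ⟨b, hab.symm, hcd.symm, h2.symm⟩
      · exact ⟨x, hxa, hxc, rfl⟩
  · refine ncard_range_le_sub_two hbd (fun x => ?_)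
    by_cases hxb : x = b
    · subst hxb
      by_cases had : a = d
      · refine ⟨c, ?_, hcd, by rw [h2, ← had, h1]⟩
        rintro rfl; exact hne (Or.inr ⟨rfl, had.symm⟩)
      · exact ⟨a, hab, had, h1⟩
    · by_cases hxd : x = d
      · subst hxd
        by_cases hcb : c = b
        · refine ⟨a, hab, ?_, by rw [h1, ← hcb, h2]⟩
          rintro rfl; exact hne (Or.inr ⟨hcb, rfl⟩)
        · exact ⟨c, hcb, hcd, h2⟩
      · exact ⟨x, hxb, hxd, rfl⟩

lemma ncard_range_le_sub_one {φ : S → S} {a b : S} (hab : a ≠ b) (h : φ a = φ b) :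
    (Set.range φ).ncard ≤ Fintype.card S - 1 := by
  have hsub : Set.range φ ⊆ φ '' (Set.univ \ {b}) := by
    rintro x ⟨y, rfl⟩
    by_cases hyb : y = b
    · exact ⟨a, ⟨trivial, by simp [hab]⟩, by rw [h, hyb]⟩
    · exact ⟨y, ⟨trivial, by simp [hyb]⟩, rfl⟩
  calc (Set.range φ).ncard ≤ (φ '' (Set.univ \ {b})).ncard :=
        Set.ncard_le_ncard hsub (Set.toFinite _)
    _ ≤ (Set.univ \ ({b} : Set S)).ncard := Set.ncard_image_le (Set.toFinite _)
    _ = Fintype.card S - 1 := by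
        rw [Set.ncard_diff (Set.subset_univ _), Set.ncard_univ,
          Nat.card_eq_fintype_card, Set.ncard_singleton]

lemma not_injective_of_small {φ : S → S} (h : (Set.range φ).ncard ≤ Fintype.card S - 1)
    (hcards : 1 ≤ Fintype.card S) : ∃ a b : S, a ≠ b ∧ φ a = φ b := by
  by_contra hinj
  push_neg at hinj
  have hinj' : Function.Injective φ := by
    intro x y hxy
    by_contra hne
    exact hinj x y hne hxy
  have : (Set.range φ).ncard = Fintype.card S := by
    rw [← Set.image_univ, Set.ncard_image_of_injective _ hinj', Set.ncard_univ,
      Nat.card_eq_fintype_card]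
  omega

lemma exists_second_pair {φ : S → S} {a b : S} (hab : a ≠ b) (hfab : φ a = φ b)
    (hle : (Set.range φ).ncard ≤ Fintype.card S - 2) (hcards : 3 ≤ Fintype.card S) :
    ∃ c d : S, c ≠ d ∧ φ c = φ d ∧ ¬ ((c = a ∧ d = b) ∨ (c = b ∧ d = a)) := by
  by_contra hall
  push_neg at hall
  have hinj : Set.InjOn φ (Set.univ \ {b}) := by
    intro x hx y hy hxy
    by_contra hne
    rcases hall x y hne hxy with ⟨rfl, rfl⟩ | ⟨rfl, rfl⟩
    · exact hy.2 rfl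
    · exact hx.2 rfl
  have h1 : (φ '' (Set.univ \ {b})).ncard = Fintype.card S - 1 := by
    rw [Set.ncard_image_of_injOn hinj, Set.ncard_diff (Set.subset_univ _), Set.ncard_univ,
      Nat.card_eq_fintype_card, Set.ncard_singleton]
  have h2 : (φ '' (Set.univ \ {b})).ncard ≤ (Set.range φ).ncard :=
    Set.ncard_le_ncard (Set.image_subset_range _ _) (Set.toFinite _)
  omega

lemma range_eq_compl_singleton {φ : S → S} (h : (Set.range φ).ncard = Fintype.card S - 1)
    (hcards : 1 ≤ Fintype.card S) :
    ∃ z, Set.range φ = Set.univ \ {z} := by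
  have hfin : (Set.range φ).ncard ≤ Fintype.card S := by
    rw [← Nat.card_eq_fintype_card, ← Set.ncard_univ]
    exact Set.ncard_le_ncard (Set.subset_univ _) (Set.toFinite _)
  have h1 : (Set.univ \ Set.range φ).ncard = 1 := by
    rw [Set.ncard_diff (Set.subset_univ _), Set.ncard_univ, Nat.card_eq_fintype_card, h]
    omega
  obtain ⟨z, hz⟩ := Set.ncard_eq_one.mp h1
  exact ⟨z, by rw [← Set.diff_diff_cancel_left (Set.subset_univ (Set.range φ)), hz]⟩

end Comb

section Meas
variable [Fintype S] [DecidableEq S] [MeasurableSpace S] [DiscreteMeasurableSpace S]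
variable {ν : Measure (S → S)} {μbar : Measure (ℕ → S → S)}

lemma measurable_fwd (t : ℕ) : Measurable (fun F : ℕ → S → S => fwd F t) := by
  induction t with
  | zero => exact measurable_const
  | succ t ih =>
      have : (fun F : ℕ → S → S => fwd F (t + 1))
          = (fun p : (S → S) × (S → S) => p.1 ∘ p.2) ∘
            (fun F : ℕ → S → S => (F (t + 1), fwd F t)) := rfl
      rw [this]
      exact Measurable.of_discrete.comp ((measurable_pi_apply (t+1)).prodMk ih)

lemma measurable_ktF (t : ℕ) : Measurable (fun F : ℕ → S → S => ktF F t) :=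
  (Measurable.of_discrete (f := fun φ : S → S => (Set.range φ).ncard)).comp (measurable_fwd t)

lemma kF_eq_iff (F : ℕ → S → S) (k : ℕ) :
    kF F = k ↔ (∃ t, ktF F t = k) ∧ ∀ t, k ≤ ktF F t := by
  constructor
  · rintro rfl
    constructor
    · have : kF F ∈ Set.range (fun t => ktF F t) := by
        apply Nat.sInf_mem
        exact ⟨ktF F 0, 0, rfl⟩
      obtain ⟨t, ht⟩ := this
      exact ⟨t, ht⟩
    · intro t
      exact Nat.sInf_le ⟨t, rfl⟩
  · rintro ⟨⟨t0, ht0⟩, hlb⟩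
    refine le_antisymm (ht0 ▸ Nat.sInf_le ⟨t0, rfl⟩) ?_
    exact le_csInf ⟨ktF F 0, 0, rfl⟩ (by rintro b ⟨t, rfl⟩; exact hlb t)

lemma kF_le_ktF (F : ℕ → S → S) (T : ℕ) : kF F ≤ ktF F T := Nat.sInf_le ⟨T, rfl⟩

lemma ktF_zero (g : ℕ → S → S) : ktF g 0 = Fintype.card S := by
  show (Set.range (id : S → S)).ncard = Fintype.card S
  rw [Set.range_id, Set.ncard_univ, Nat.card_eq_fintype_card]

lemma measurable_kset (k : ℕ) : MeasurableSet {F : ℕ → S → S | kF F = k} := by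
  have : {F : ℕ → S → S | kF F = k}
      = (⋃ t, {F | ktF F t = k}) ∩ ⋂ t, {F | k ≤ ktF F t} := by
    ext F
    simp only [Set.mem_setOf_eq, Set.mem_inter_iff, Set.mem_iUnion, Set.mem_iInter]
    exact kF_eq_iff F k
  rw [this]
  exact (MeasurableSet.iUnion fun t =>
      (measurable_ktF t) (MeasurableSet.singleton k)).inter
    (MeasurableSet.iInter fun t => (measurable_ktF t) measurableSet_Ici)

/-- the cylinder determined by `g` on times `1,…,T` -/
def cyl (g : ℕ → S → S) (T : ℕ) : Set (ℕ → S → S) := {F | ∀ s ∈ Finset.Icc 1 T, F s = g s}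

/-- all of the first `T` letters of `g` lie in the support of `ν` -/
def Wordish (ν : Measure (S → S)) (g : ℕ → S → S) (T : ℕ) : Prop :=
  ∀ s ∈ Finset.Icc 1 T, 0 < ν {g s}

lemma wordish_cat {g h : ℕ → S → S} {T T' : ℕ} (hg : Wordish ν g T) (hh : Wordish ν h T') :
    Wordish ν (cat g T h) (T + T') := by
  intro s hs
  rcases Finset.mem_Icc.mp hs with ⟨hs1, hs2⟩
  by_cases hsT : s ≤ T
  · have hc : cat g T h s = g s := by simp [cat, hsT]
    rw [hc]
    exact hg s (Finset.mem_Icc.mpr ⟨hs1, hsT⟩)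
  · have hc : cat g T h s = h (s - T) := by simp [cat, hsT]
    rw [hc]
    exact hh (s - T) (Finset.mem_Icc.mpr ⟨by omega, by omega⟩)

lemma fwd_eq_on_cyl {g F : ℕ → S → S} {T : ℕ} (h : F ∈ cyl g T) : fwd F T = fwd g T :=
  fwd_congr (fun s hs1 hs2 => h s (Finset.mem_Icc.mpr ⟨hs1, hs2⟩))

lemma cyl_pos (hiid : IsIID ν μbar) {g : ℕ → S → S} {T : ℕ} (hw : Wordish ν g T) :
    0 < μbar (cyl g T) := by
  rw [show μbar (cyl g T) = ∏ s ∈ Finset.Icc 1 T, ν {g s} from hiid _ g]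
  exact CanonicallyOrderedAdd.prod_pos.mpr hw

lemma exists_pos_of_iUnion {α : Type*} [MeasurableSpace α] {μ : Measure α} {A : ℕ → Set α}
    (h : 0 < μ (⋃ t, A t)) : ∃ t, 0 < μ (A t) := by
  by_contra hall
  push_neg at hall
  simp only [le_zero_iff] at hall
  have hle := measure_iUnion_le (μ := μ) A
  rw [tsum_congr hall] at hle
  simp only [tsum_zero, le_zero_iff] at hle
  rw [hle] at h
  exact lt_irrefl _ h

/-- From a positive-probability event determined by coordinates `1,…,T`, extract a
representative whose first `T` letters lie in the support of `ν`. -/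
lemma extract_word [Nonempty S] (hiid : IsIID ν μbar) {T : ℕ} {E : Set (ℕ → S → S)}
    (hdet : ∀ F G, (∀ s ∈ Finset.Icc 1 T, F s = G s) → F ∈ E → G ∈ E)
    (hpos : 0 < μbar E) :
    ∃ g : ℕ → S → S, Wordish ν g T ∧ g ∈ E := by
  classical
  set ι := (Fin (T + 1) → (S → S))
  let gw : ι → ℕ → S → S := fun w s => if h : s < T + 1 then w ⟨s, h⟩ else id
  have hcover : E ⊆ ⋃ w : ι, (E ∩ cyl (gw w) T) := by
    intro F hF
    refine Set.mem_iUnion.mpr ⟨fun k => F k, hF, ?_⟩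
    intro s hs
    rcases Finset.mem_Icc.mp hs with ⟨_, hs2⟩
    simp only [gw]
    rw [dif_pos (by omega)]
  have hsum : 0 < ∑' w : ι, μbar (E ∩ cyl (gw w) T) :=
    lt_of_lt_of_le hpos (le_trans (measure_mono hcover) (measure_iUnion_le _))
  have hex : ∃ w : ι, 0 < μbar (E ∩ cyl (gw w) T) := by
    by_contra hall
    push_neg at hall
    simp only [le_zero_iff] at hall
    rw [tsum_congr hall] at hsum
    simp at hsum
  obtain ⟨w, hw⟩ := hex
  obtain ⟨F0, hF0E, hF0c⟩ := nonempty_of_measure_ne_zero hw.ne'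
  have hcylpos : 0 < μbar (cyl (gw w) T) :=
    lt_of_lt_of_le hw (measure_mono Set.inter_subset_right)
  have hword : Wordish ν (gw w) T := by
    rw [show μbar (cyl (gw w) T) = ∏ s ∈ Finset.Icc 1 T, ν {gw w s} from hiid _ _] at hcylpos
    exact fun s hs => CanonicallyOrderedAdd.prod_pos.mp hcylpos s hs
  exact ⟨gw w, hword, hdet F0 (gw w) (fun s hs => hF0c s hs) hF0E⟩

/-- any positive measure set meets the a.s. event `{kF = kstar}`. -/
lemma meets_kset [IsProbabilityMeasure μbar] {kstar : ℕ}
    (hk : μbar {F : ℕ → S → S | kF F = kstar} = 1)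
    {A : Set (ℕ → S → S)} (hA : 0 < μbar A) :
    ∃ F ∈ A, kF F = kstar := by
  set K := {F : ℕ → S → S | kF F = kstar}
  have hKc : μbar Kᶜ = 0 := by
    rw [measure_compl (measurable_kset kstar) (measure_ne_top _ _), hk, measure_univ]
    simp
  have h1 : μbar A ≤ μbar (A ∩ K) + μbar (A \ K) := measure_le_inter_add_diff _ _ _
  have h2 : μbar (A \ K) = 0 :=
    le_antisymm (le_trans (measure_mono (Set.diff_subset_compl A K)) hKc.le) zero_le
  rw [h2, add_zero] at h1
  obtain ⟨F, hFA, hFK⟩ := nonempty_of_measure_ne_zero (lt_of_lt_of_le hA h1).ne'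
  exact ⟨F, hFA, hFK⟩

lemma word_lower [IsProbabilityMeasure μbar] (hiid : IsIID ν μbar) {kstar : ℕ}
    (hk : μbar {F : ℕ → S → S | kF F = kstar} = 1)
    {g : ℕ → S → S} {T : ℕ} (hw : Wordish ν g T) : kstar ≤ ktF g T := by
  obtain ⟨F, hFc, hFk⟩ := meets_kset hk (cyl_pos hiid hw)
  calc kstar = kF F := hFk.symm
    _ ≤ ktF F T := kF_le_ktF F T
    _ = ktF g T := by unfold ktF; rw [fwd_eq_on_cyl hFc]

lemma exists_word_attain [Nonempty S] [IsProbabilityMeasure μbar] (hiid : IsIID ν μbar)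
    {kstar : ℕ} (hk : μbar {F : ℕ → S → S | kF F = kstar} = 1)
    (hlt : kstar < Fintype.card S) :
    ∃ g T, Wordish ν g T ∧ 1 ≤ T ∧ ktF g T ≤ kstar := by
  have hsub : {F : ℕ → S → S | kF F = kstar} ⊆ ⋃ T, {F | ktF F T ≤ kstar} := by
    intro F hF
    obtain ⟨⟨t, ht⟩, -⟩ := (kF_eq_iff F kstar).mp hF
    exact Set.mem_iUnion.mpr ⟨t, ht.le⟩
  have hpos : 0 < μbar (⋃ T, {F : ℕ → S → S | ktF F T ≤ kstar}) := by
    refine lt_of_lt_of_le ?_ (measure_mono hsub)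
    rw [hk]
    norm_num
  obtain ⟨T, hT⟩ := exists_pos_of_iUnion hpos
  obtain ⟨g, hWg, hg⟩ := extract_word hiid (E := {F : ℕ → S → S | ktF F T ≤ kstar})
    (fun F G hFG hF => by
      have : fwd G T = fwd F T := fwd_congr (fun s hs1 hs2 => (hFG s (Finset.mem_Icc.mpr ⟨hs1, hs2⟩)).symm)
      show ktF G T ≤ kstar
      unfold ktF
      rw [this]
      exact hF) hT
  have hg2 : ktF g T ≤ kstar := hg
  refine ⟨g, T, hWg, ?_, hg2⟩
  rcases Nat.eq_zero_or_pos T with rfl | hT1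
  · rw [ktF_zero] at hg2
    omega
  · exact hT1

lemma word_to_coal (hiid : IsIID ν μbar) {g : ℕ → S → S} {T : ℕ} (hw : Wordish ν g T)
    (hT : 1 ≤ T) {i j : S} (hcol : fwd g T i = fwd g T j) :
    0 < μbar (coalEvent i j) := by
  refine lt_of_lt_of_le (cyl_pos hiid hw) (measure_mono ?_)
  intro F hF
  exact ⟨T, hT, by rw [fwd_eq_on_cyl hF, hcol]⟩

lemma coal_to_word [Nonempty S] (hiid : IsIID ν μbar) {i j : S}
    (hpos : 0 < μbar (coalEvent i j)) :
    ∃ g T, Wordish ν g T ∧ 1 ≤ T ∧ fwd g T i = fwd g T j := by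
  have hrw : coalEvent i j = ⋃ t, {F : ℕ → S → S | 1 ≤ t ∧ fwd F t i = fwd F t j} := by
    ext F
    simp [coalEvent, Set.mem_iUnion]
  rw [hrw] at hpos
  obtain ⟨T, hT⟩ := exists_pos_of_iUnion hpos
  obtain ⟨g, hWg, hg⟩ := extract_word hiid
    (E := {F : ℕ → S → S | 1 ≤ T ∧ fwd F T i = fwd F T j})
    (fun F G hFG hF => by
      have : fwd G T = fwd F T :=
        fwd_congr (fun s hs1 hs2 => (hFG s (Finset.mem_Icc.mpr ⟨hs1, hs2⟩)).symm)
      exact ⟨hF.1, by rw [this]; exact hF.2⟩) hT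
  exact ⟨g, T, hWg, hg.1, hg.2⟩

end Meas

end Aux

section Irr

variable {S : Type*} [Fintype S] [DecidableEq S] [MeasurableSpace S] [DiscreteMeasurableSpace S]
variable {ν : Measure (S → S)} {μbar : Measure (ℕ → S → S)} {P : S → S → ℝ}
set_option linter.unusedSectionVars false

lemma exists_letter (hcons : Consistent P ν) {x y : S} (h : 0 < P x y) :
    ∃ f : S → S, 0 < ν {f} ∧ f x = y := by
  have hset : 0 < ν {f : S → S | f x = y} := by
    rw [hcons x y]
    exact ENNReal.ofReal_pos.mpr h
  by_contra hall
  push_neg at hall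
  have hz : ν {f : S → S | f x = y} = 0 := by
    have hU : {f : S → S | f x = y} = ⋃ f ∈ {f : S → S | f x = y}, {f} := by
      ext f0
      simp
    rw [hU, measure_biUnion_null_iff (Set.to_countable _)]
    intro f hf
    by_contra h0
    exact hall f (pos_iff_ne_zero.mpr h0) hf
  rw [hz] at hset
  exact lt_irrefl _ hset

lemma pow_entry_nonneg (hP : IsStochastic P) :
    ∀ (t : ℕ) (x y : S), 0 ≤ ((Matrix.of P) ^ t) x y := by
  intro t
  induction t with
  | zero =>
      intro x y
      rw [pow_zero, Matrix.one_apply]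
      split <;> norm_num
  | succ t ih =>
      intro x y
      rw [pow_succ, Matrix.mul_apply]
      exact Finset.sum_nonneg fun k _ => mul_nonneg (ih x k) (hP.1 k y)

lemma pow_pos_to_word (hP : IsStochastic P) (hcons : Consistent P ν) :
    ∀ (t : ℕ) (x y : S), 0 < ((Matrix.of P) ^ (t + 1)) x y →
      ∃ g : ℕ → S → S, Wordish ν g (t + 1) ∧ fwd g (t + 1) x = y := by
  intro t
  induction t with
  | zero =>
      intro x y h
      rw [pow_one] at h
      obtain ⟨f, hf, hfx⟩ := exists_letter hcons h
      refine ⟨fun _ => f, ?_, ?_⟩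
      · intro s hs
        exact hf
      · show f (fwd (fun _ => f) 0 x) = y
        exact hfx
  | succ t ih =>
      intro x y h
      rw [pow_succ, Matrix.mul_apply] at h
      have hex : ∃ k, 0 < ((Matrix.of P) ^ (t + 1)) x k * P k y := by
        by_contra hno
        push_neg at hno
        have hzero : ∀ k ∈ Finset.univ, ((Matrix.of P) ^ (t + 1)) x k * Matrix.of P k y = 0 :=
          fun k _ => le_antisymm (hno k) (mul_nonneg (pow_entry_nonneg hP _ x k) (hP.1 k y))
        rw [Finset.sum_eq_zero hzero] at h
        exact lt_irrefl _ h
      obtain ⟨k, hk⟩ := hex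
      have h1 : 0 < ((Matrix.of P) ^ (t + 1)) x k := by
        rcases lt_or_eq_of_le (pow_entry_nonneg hP (t+1) x k) with h' | h'
        · exact h'
        · rw [← h'] at hk; simp at hk
      have h2 : 0 < P k y := by
        rcases lt_or_eq_of_le (hP.1 k y) with h' | h'
        · exact h'
        · rw [← h'] at hk; simp at hk
      obtain ⟨g, hWg, hg⟩ := ih x k h1
      obtain ⟨f, hf, hfk⟩ := exists_letter hcons h2
      refine ⟨cat g (t + 1) (fun _ => f), ?_, ?_⟩
      · exact wordish_cat hWg (fun s hs => hf)
      · show fwd (cat g (t + 1) (fun _ => f)) ((t + 1) + 1) x = y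
        rw [fwd_cat]
        show f (fwd (fun _ => f) 0 (fwd g (t+1) x)) = y
        rw [show fwd (fun _ => f) 0 (fwd g (t+1) x) = fwd g (t+1) x from rfl, hg, hfk]

lemma irr_to_word (hP : IsStochastic P) (hirr : Irred P) (hcons : Consistent P ν) (x y : S) :
    ∃ g T, Wordish ν g T ∧ 1 ≤ T ∧ fwd g T x = y := by
  obtain ⟨t, ht1, htpos⟩ := hirr x y
  obtain ⟨t', rfl⟩ : ∃ t', t = t' + 1 := ⟨t - 1, by omega⟩
  obtain ⟨g, hWg, hg⟩ := pow_pos_to_word hP hcons t' x y htpos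
  exact ⟨g, t' + 1, hWg, by omega, hg⟩

end Irr

section Core
variable {S : Type*} [Fintype S] [DecidableEq S] [MeasurableSpace S] [DiscreteMeasurableSpace S]
variable {ν : Measure (S → S)} {μbar : Measure (ℕ → S → S)} {P : S → S → ℝ}
set_option linter.unusedSectionVars false

set_option maxHeartbeats 1000000 in
lemma core [IsProbabilityMeasure μbar]
    {n : ℕ} (hcard : Fintype.card S = n) (hn : 3 ≤ n)
    (hP : IsStochastic P) (hirr : Irred P) (hcons : Consistent P ν)
    (hiid : IsIID ν μbar) (hk : μbar {F : ℕ → S → S | kF F = n - 1} = 1)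
    {i j i' j' : S} (hij : i ≠ j) (hij' : i' ≠ j')
    (hc1 : 0 < μbar (coalEvent i j)) (hc2 : 0 < μbar (coalEvent i' j'))
    (hdist : ¬ ((i' = i ∧ j' = j) ∨ (i' = j ∧ j' = i))) : False := by
  haveI hNe : Nonempty S := Fintype.card_pos_iff.mp (by omega)
  have H1 : ∀ (g : ℕ → S → S) (T : ℕ), Wordish ν g T → Fintype.card S - 1 ≤ ktF g T := by
    intro g T hw
    have := word_lower hiid hk hw
    omega
  obtain ⟨u, Tu, hWu, hTu, hu⟩ := coal_to_word hiid hc1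
  obtain ⟨v, Tv, hWv, hTv, hv⟩ := coal_to_word hiid hc2
  have lemA : ∀ (g : ℕ → S → S) (T : ℕ), Wordish ν g T →
      (∃ a b : S, a ≠ b ∧ fwd g T a = fwd g T b) →
      ∀ (h : ℕ → S → S) (T' : ℕ), Wordish ν h T' → ∀ x y : S, x ≠ y →
        fwd h T' x = fwd h T' y →
        ¬ (x ∈ Set.range (fwd g T) ∧ y ∈ Set.range (fwd g T)) := by
    rintro g T hWg ⟨a, b, hab, hgab⟩ h T' hWh x y hxy hcol ⟨⟨a0, ha0⟩, ⟨b0, hb0⟩⟩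
    have hWc : Wordish ν (cat g T h) (T + T') := wordish_cat hWg hWh
    have hψ : fwd (cat g T h) (T + T') = fwd h T' ∘ fwd g T := fwd_cat g h T T'
    have hcA : fwd (cat g T h) (T + T') a = fwd (cat g T h) (T + T') b := by
      rw [hψ]
      show fwd h T' (fwd g T a) = fwd h T' (fwd g T b)
      rw [hgab]
    have hcB : fwd (cat g T h) (T + T') a0 = fwd (cat g T h) (T + T') b0 := by
      rw [hψ]
      show fwd h T' (fwd g T a0) = fwd h T' (fwd g T b0)
      rw [ha0, hb0]
      exact hcol
    have ha0b0 : a0 ≠ b0 := fun he => hxy (by rw [← ha0, he, hb0])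
    have hpairs : ¬ ((a0 = a ∧ b0 = b) ∨ (a0 = b ∧ b0 = a)) := by
      rintro (⟨rfl, rfl⟩ | ⟨rfl, rfl⟩)
      · exact hxy (by rw [← ha0, ← hb0, hgab])
      · exact hxy (by rw [← ha0, ← hb0, hgab])
    have hbound := two_pairs_bound hab ha0b0 hcA hcB hpairs
    have hlow := H1 _ _ hWc
    unfold ktF at hlow
    omega
  have missing : ∀ (g : ℕ → S → S) (T : ℕ), Wordish ν g T →
      (∃ a b : S, a ≠ b ∧ fwd g T a = fwd g T b) →
      ∃ z, Set.range (fwd g T) = Set.univ \ {z} ∧ (z = i ∨ z = j) ∧ (z = i' ∨ z = j') := by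
    intro g T hW hcol
    obtain ⟨a, b, hab, hgab⟩ := hcol
    have h_le := ncard_range_le_sub_one hab hgab
    have h_ge := H1 g T hW
    unfold ktF at h_ge
    have heq : (Set.range (fwd g T)).ncard = Fintype.card S - 1 := by omega
    obtain ⟨z, hz⟩ := range_eq_compl_singleton heq (by omega)
    refine ⟨z, hz, ?_, ?_⟩
    · by_contra hno
      push_neg at hno
      refine lemA g T hW ⟨a, b, hab, hgab⟩ u Tu hWu i j hij hu ⟨?_, ?_⟩
      · rw [hz]
        exact ⟨trivial, fun hm => hno.1 (Set.mem_singleton_iff.mp hm).symm⟩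
      · rw [hz]
        exact ⟨trivial, fun hm => hno.2 (Set.mem_singleton_iff.mp hm).symm⟩
    · by_contra hno
      push_neg at hno
      refine lemA g T hW ⟨a, b, hab, hgab⟩ v Tv hWv i' j' hij' hv ⟨?_, ?_⟩
      · rw [hz]
        exact ⟨trivial, fun hm => hno.1 (Set.mem_singleton_iff.mp hm).symm⟩
      · rw [hz]
        exact ⟨trivial, fun hm => hno.2 (Set.mem_singleton_iff.mp hm).symm⟩
  obtain ⟨c, hcrange, hcij, hcij'⟩ := missing u Tu hWu ⟨i, j, hij, hu⟩
  have huniqz : ∀ z, (z = i ∨ z = j) → (z = i' ∨ z = j') → z = c := by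
    intro z hz hz'
    by_contra hzc
    have hA : (z = i ∧ c = j) ∨ (z = j ∧ c = i) := by
      rcases hz with rfl | rfl <;> rcases hcij with h | h <;> tauto
    have hB : (z = i' ∧ c = j') ∨ (z = j' ∧ c = i') := by
      rcases hz' with rfl | rfl <;> rcases hcij' with h | h <;> tauto
    apply hdist
    rcases hA with ⟨hA1, hA2⟩ | ⟨hA1, hA2⟩ <;> rcases hB with ⟨hB1, hB2⟩ | ⟨hB1, hB2⟩
    · exact Or.inl ⟨hB1.symm.trans hA1, hB2.symm.trans hA2⟩
    · exact Or.inr ⟨hB2.symm.trans hA2, hB1.symm.trans hA1⟩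
    · exact Or.inr ⟨hB1.symm.trans hA1, hB2.symm.trans hA2⟩
    · exact Or.inl ⟨hB2.symm.trans hA2, hB1.symm.trans hA1⟩
  have hclose : ∀ f : S → S, 0 < ν {f} → ∀ x : S, x ≠ c → f x ≠ c := by
    intro f hf
    have hWf : Wordish ν (fun _ => f) 1 := fun s _ => hf
    have hW' : Wordish ν (cat u Tu (fun _ => f)) (Tu + 1) := wordish_cat hWu hWf
    have hψ : fwd (cat u Tu (fun _ => f)) (Tu + 1) = fwd (fun _ => f) 1 ∘ fwd u Tu :=
      fwd_cat u (fun _ => f) Tu 1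
    have hone : fwd (fun _ : ℕ => f) 1 = f := rfl
    have hcol' : fwd (cat u Tu (fun _ => f)) (Tu + 1) i
        = fwd (cat u Tu (fun _ => f)) (Tu + 1) j := by
      rw [hψ]
      show fwd (fun _ => f) 1 (fwd u Tu i) = fwd (fun _ => f) 1 (fwd u Tu j)
      rw [hu]
    obtain ⟨z', hz'range, hz'ij, hz'ij'⟩ := missing _ _ hW' ⟨i, j, hij, hcol'⟩
    have hz'c : z' = c := huniqz z' hz'ij hz'ij'
    rw [hz'c] at hz'range
    have himg : f '' (Set.univ \ {c}) = Set.univ \ {c} := by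
      calc f '' (Set.univ \ {c}) = f '' (Set.range (fwd u Tu)) := by rw [hcrange]
        _ = Set.range (f ∘ fwd u Tu) := (Set.range_comp f _).symm
        _ = Set.range (fwd (cat u Tu (fun _ => f)) (Tu + 1)) := by rw [hψ, hone]
        _ = Set.univ \ {c} := hz'range
    intro x hx hfx
    have hmem : f x ∈ f '' (Set.univ \ {c}) :=
      ⟨x, ⟨trivial, fun hm => hx (Set.mem_singleton_iff.mp hm)⟩, rfl⟩
    rw [himg] at hmem
    exact hmem.2 (Set.mem_singleton_iff.mpr hfx)
  obtain ⟨x0, hx0⟩ := Fintype.exists_ne_of_one_lt_card (by omega) c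
  obtain ⟨g, T, hWg, hTg, hgx⟩ := irr_to_word hP hirr hcons x0 c
  have hstay : ∀ t, t ≤ T → fwd g t x0 ≠ c := by
    intro t
    induction t with
    | zero => intro _; exact hx0
    | succ s ih =>
        intro hst
        have hprev := ih (by omega)
        show (g (s+1)) (fwd g s x0) ≠ c
        exact hclose (g (s+1)) (hWg (s+1) (Finset.mem_Icc.mpr ⟨by omega, hst⟩)) _ hprev
  exact hstay T le_rfl hgx

end Core

-- STATEMENT 15
theorem stmt15 [Fintype S] [DecidableEq S]
    [MeasurableSpace S] [DiscreteMeasurableSpace S]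
    (n : ℕ) (hcard : Fintype.card S = n) (hn : 3 ≤ n)
    (P : S → S → ℝ) (hP : IsStochastic P) (hirr : Irred P)
    (ν : Measure (S → S)) [IsProbabilityMeasure ν] (hcons : Consistent P ν)
    (μbar : Measure (ℕ → S → S)) [IsProbabilityMeasure μbar] (hiid : IsIID ν μbar)
    (kstar : ℕ) (hk : μbar {F | kF F = kstar} = 1) :
    kstar = n - 1 ↔
      ∃ i j : S, i ≠ j ∧ 0 < μbar (coalEvent i j) ∧
        ∀ i' j' : S, i' ≠ j' → 0 < μbar (coalEvent i' j') →
          (i' = i ∧ j' = j) ∨ (i' = j ∧ j' = i) := by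
  haveI hNe : Nonempty S := Fintype.card_pos_iff.mp (by omega)
  have hcards3 : 3 ≤ Fintype.card S := by omega
  constructor
  · intro hks
    subst hks
    obtain ⟨g, T, hW, hT1, hle⟩ := exists_word_attain hiid hk (by omega)
    have hsmall : (Set.range (fwd g T)).ncard ≤ Fintype.card S - 1 := by
      unfold ktF at hle
      omega
    obtain ⟨a, b, hab, hfab⟩ := not_injective_of_small hsmall (by omega)
    have hpos := word_to_coal hiid hW hT1 hfab
    refine ⟨a, b, hab, hpos, ?_⟩
    intro i' j' hij' hpos'
    by_contra hdist
    exact core hcard hn hP hirr hcons hiid hk hab hij' hpos hpos' hdist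
  · rintro ⟨i, j, hij, hpos, huniq⟩
    obtain ⟨g, T, hW, hT1, hcol⟩ := coal_to_word hiid hpos
    have h1 : kstar ≤ ktF g T := word_lower hiid hk hW
    have h2 : ktF g T ≤ Fintype.card S - 1 := ncard_range_le_sub_one hij hcol
    by_contra hne
    have hklt : kstar < Fintype.card S := by omega
    obtain ⟨g2, T2, hW2, hT21, hle2⟩ := exists_word_attain hiid hk hklt
    have hsm : (Set.range (fwd g2 T2)).ncard ≤ Fintype.card S - 2 := by
      unfold ktF at hle2
      omega
    obtain ⟨a, b, hab, hfab⟩ := not_injective_of_small (le_trans hsm (by omega)) (by omega)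
    obtain ⟨cc, dd, hccdd, hfcd, hpairs⟩ := exists_second_pair hab hfab hsm hcards3
    have hp1 := word_to_coal hiid hW2 hT21 hfab
    have hp2 := word_to_coal hiid hW2 hT21 hfcd
    rcases huniq a b hab hp1 with ⟨rfl, rfl⟩ | ⟨rfl, rfl⟩ <;>
      rcases huniq cc dd hccdd hp2 with ⟨rfl, rfl⟩ | ⟨rfl, rfl⟩ <;> tauto


end CFTP
end
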